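/- Let 0 < λN < λN1 be real numbers, let ε > 0 satisfy 1/ε ≥ 3·λN1 + λN, let θ ∈ ℝ satisfy 2θ(εθ − 1) + λN + λN1 = 0, and let λ ∈ ℝ satisfy 1 − 2ελ + 2εθ(εθ−1) ≥ 0. Then for every μ ∈ ℝ the complex number R(μ) := (−εμ² + λ + θ(εθ−1)) + i·(1−2εθ)·μ satisfies |R(μ)| ≥ |λ − (λN + λN1)/2|, and equality holds at μ = 0. -/

import Mathlib

open Complex

theorem stmt_2 (lamN lamN1 eps theta lam : ℝ)
    (hlamN : 0 < lamN) (hlt : lamN < lamN1)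
    (heps : 0 < eps) (hgap : 1 / eps ≥ 3 * lamN1 + lamN)
    (htheta : 2 * theta * (eps * theta - 1) + lamN + lamN1 = 0)
    (hcase : 1 - 2 * eps * lam + 2 * eps * theta * (eps * theta - 1) ≥ 0) :
    (∀ mu : ℝ,
      ‖(((-eps * mu ^ 2 + lam + theta * (eps * theta - 1)) : ℝ)
          + Complex.I * ((1 - 2 * eps * theta) * mu : ℝ))‖
        ≥ |lam - (lamN + lamN1) / 2|) ∧
    ‖(((-eps * (0:ℝ) ^ 2 + lam + theta * (eps * theta - 1)) : ℝ)
        + Complex.I * ((1 - 2 * eps * theta) * (0:ℝ) : ℝ))‖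
      = |lam - (lamN + lamN1) / 2| := by
  have key : ∀ mu : ℝ,
      ‖(((-eps * mu ^ 2 + lam + theta * (eps * theta - 1)) : ℝ)
          + Complex.I * ((1 - 2 * eps * theta) * mu : ℝ))‖
        ≥ |lam - (lamN + lamN1) / 2| := by
    intro mu
    set a : ℝ := -eps * mu ^ 2 + lam + theta * (eps * theta - 1) with ha
    set b : ℝ := (1 - 2 * eps * theta) * mu with hb
    have h1 : ((a : ℂ) + Complex.I * (b : ℝ)) = (a : ℂ) + (b : ℝ) * Complex.I := by
      ring
    rw [h1, Complex.norm_add_mul_I]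
    rw [ge_iff_le, Real.le_sqrt (abs_nonneg _), _root_.sq_abs]
    have ht : theta * (eps * theta - 1) = -(lamN + lamN1) / 2 := by linarith
    have ha2 : a = (lam - (lamN + lamN1) / 2) - eps * mu ^ 2 := by rw [ha, ht]; ring
    have hcoef : (1 - 2 * eps * theta) ^ 2
        - 2 * eps * (lam - (lamN + lamN1) / 2) ≥ 0 := by nlinarith [htheta]
    rw [ha2, hb]
    nlinarith [mul_nonneg hcoef (sq_nonneg mu), sq_nonneg (eps * mu ^ 2)]
    positivity
  refine ⟨key, ?_⟩
  have h0 : ((-eps * (0:ℝ) ^ 2 + lam + theta * (eps * theta - 1)) : ℝ)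
      = lam - (lamN + lamN1) / 2 := by nlinarith
  have h1 : (((-eps * (0:ℝ) ^ 2 + lam + theta * (eps * theta - 1)) : ℝ) : ℂ)
      + Complex.I * (((1 - 2 * eps * theta) * (0:ℝ) : ℝ) : ℂ)
      = ((lam - (lamN + lamN1) / 2 : ℝ) : ℂ) := by
    rw [h0]; push_cast; ring
  rw [h1, Complex.norm_real, Real.norm_eq_abs]
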